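/- For every real inner product space and every family of vectors (V_w), ‖(id−E)∘|S|‖² = ‖(id−E)∘id‖², where |S| is the reversal endomorphism and the inner product is taken over the words of length n. -/

import Mathlib

open Finsupp

/-- Words over the alphabet `A = {0,1,…,d}`. -/
abbrev Word (d : ℕ) : Type := List (Fin (d+1))

/-- The free real vector space with basis the set of all words. -/
abbrev KA (d : ℕ) : Type := Word d →₀ ℝ

/-- Shuffle product of two words, as an element of `KA d`. -/
noncomputable def shuffleWord (d : ℕ) : Word d → Word d → KA d
  | [], v => Finsupp.single v 1
  | a :: u, [] => Finsupp.single (a :: u) 1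
  | a :: u, b :: v =>
      Finsupp.mapDomain (List.cons a) (shuffleWord d u (b :: v)) +
      Finsupp.mapDomain (List.cons b) (shuffleWord d (a :: u) v)
  termination_by u v => u.length + v.length

/-- Bilinear extension of the shuffle product to `KA d`. -/
noncomputable def sh (d : ℕ) (x y : KA d) : KA d :=
  x.sum fun u cu => y.sum fun v cv => (cu * cv) • shuffleWord d u v

/-- Admissible words: concatenations of blocks each of which is the single
letter `0` or a pair `aa` with `a ≠ 0`. -/
inductive Admissible (d : ℕ) : Word d → Prop
  | nil : Admissible d []
  | zero {w : Word d} : Admissible d w → Admissible d (0 :: w)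
  | pair {w : Word d} (a : Fin (d+1)) : a ≠ 0 → Admissible d w →
      Admissible d (a :: a :: w)

/-- Number of `0` letters. -/
def zc (d : ℕ) (w : Word d) : ℕ := w.count 0

/-- Half the number of nonzero letters. -/
def dc (d : ℕ) (w : Word d) : ℕ := (w.length - w.count 0) / 2

def nc (d : ℕ) (w : Word d) : ℕ := zc d w + dc d w

open Classical in
/-- The expectation map on words. -/
noncomputable def Ebar (d : ℕ) (t : ℝ) (w : Word d) : ℝ :=
  if Admissible d w then t ^ nc d w / (2 ^ dc d w * Nat.factorial (nc d w)) else 0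

/-- Linear extension of the expectation map to `KA d`. -/
noncomputable def EbarL (d : ℕ) (t : ℝ) (x : KA d) : ℝ :=
  x.sum fun w c => c * Ebar d t w

/-- The linear endomorphism of `KA d` determined by values on basis words. -/
noncomputable def wordLift (d : ℕ) (f : Word d → KA d) : KA d →ₗ[ℝ] KA d :=
  Finsupp.lsum ℝ fun w => LinearMap.toSpanSingleton ℝ (KA d) (f w)

/-- The identity endomorphism `id`. -/
noncomputable def idE (d : ℕ) : KA d →ₗ[ℝ] KA d := LinearMap.id

/-- The reversal endomorphism `|S|`. -/
noncomputable def revE (d : ℕ) : KA d →ₗ[ℝ] KA d :=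
  wordLift d fun w => Finsupp.single w.reverse 1

/-- The antipode `S`. -/
noncomputable def Sa (d : ℕ) : KA d →ₗ[ℝ] KA d :=
  wordLift d fun w => Finsupp.single w.reverse ((-1 : ℝ) ^ w.length)

/-- The convolution unit `ν`. -/
noncomputable def nuE (d : ℕ) : KA d →ₗ[ℝ] KA d :=
  wordLift d fun w => if w = [] then Finsupp.single ([] : Word d) 1 else 0

/-- The expectation endomorphism `E`. -/
noncomputable def EE (d : ℕ) (t : ℝ) : KA d →ₗ[ℝ] KA d :=
  wordLift d fun w => Finsupp.single ([] : Word d) (Ebar d t w)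

/-- The convolution product `X ⋆ Y`. -/
noncomputable def conv (d : ℕ) (X Y : KA d →ₗ[ℝ] KA d) : KA d →ₗ[ℝ] KA d :=
  wordLift d fun w => ∑ k ∈ Finset.range (w.length + 1),
    sh d (X (Finsupp.single (w.take k) 1)) (Y (Finsupp.single (w.drop k) 1))

/-- Convolution powers, `X^{⋆0} = ν`. -/
noncomputable def convPow (d : ℕ) (X : KA d →ₗ[ℝ] KA d) : ℕ → (KA d →ₗ[ℝ] KA d)
  | 0 => nuE d
  | k + 1 => conv d X (convPow d X k)

/-- The inner product `⟨X,Y⟩` of endomorphisms, taken over the words of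
length `n`, relative to the family of vectors `Vf`. -/
noncomputable def ip (d : ℕ) (t : ℝ) {H : Type*} [NormedAddCommGroup H]
    [InnerProductSpace ℝ H] (Vf : Word d → H) (n : ℕ)
    (X Y : KA d →ₗ[ℝ] KA d) : ℝ :=
  ∑ u : Fin n → Fin (d+1), ∑ v : Fin n → Fin (d+1),
    EbarL d t (sh d (X (Finsupp.single (List.ofFn u) 1))
                    (Y (Finsupp.single (List.ofFn v) 1))) *
      (inner ℝ (Vf (List.ofFn u)) (Vf (List.ofFn v)) : ℝ)

/-- Positive semidefiniteness of the expectation Gram matrix at grade `n`: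
indexed by the words of length `n` together with the empty word. -/
def gramPSD (d n : ℕ) (t : ℝ) : Prop :=
  ∀ c : Option (Fin n → Fin (d+1)) → ℝ,
    0 ≤ ∑ x : Option (Fin n → Fin (d+1)), ∑ y : Option (Fin n → Fin (d+1)),
      c x * c y *
        EbarL d t (shuffleWord d (x.elim ([] : Word d) List.ofFn)
                                 (y.elim ([] : Word d) List.ofFn))

section
variable {d : ℕ}

lemma shuffleWord_nil_left (v : Word d) : shuffleWord d [] v = Finsupp.single v 1 := by
  cases v <;> rw [shuffleWord]

lemma shuffleWord_nil_right (u : Word d) : shuffleWord d u [] = Finsupp.single u 1 := by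
  cases u <;> rw [shuffleWord]

lemma shuffleWord_cons_cons (a b : Fin (d+1)) (u v : Word d) :
    shuffleWord d (a :: u) (b :: v) =
      Finsupp.mapDomain (List.cons a) (shuffleWord d u (b :: v)) +
      Finsupp.mapDomain (List.cons b) (shuffleWord d (a :: u) v) := by
  rw [shuffleWord]

lemma mapDomain_comm (c a : Fin (d+1)) (x : KA d) :
    Finsupp.mapDomain (List.cons c) (Finsupp.mapDomain (· ++ [a]) x) =
    Finsupp.mapDomain (· ++ [a]) (Finsupp.mapDomain (List.cons c) x) := by
  rw [← Finsupp.mapDomain_comp, ← Finsupp.mapDomain_comp]; rfl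

end
lemma shuffle_append {d : ℕ} (a b : Fin (d+1)) (u v : Word d) :
    shuffleWord d (u ++ [a]) (v ++ [b]) =
      Finsupp.mapDomain (· ++ [a]) (shuffleWord d u (v ++ [b])) +
      Finsupp.mapDomain (· ++ [b]) (shuffleWord d (u ++ [a]) v) := by
  suffices h : ∀ N (u v : Word d), u.length + v.length ≤ N →
      shuffleWord d (u ++ [a]) (v ++ [b]) =
      Finsupp.mapDomain (· ++ [a]) (shuffleWord d u (v ++ [b])) +
      Finsupp.mapDomain (· ++ [b]) (shuffleWord d (u ++ [a]) v) from
    h _ u v le_rfl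
  intro N
  induction N with
  | zero =>
    rintro u v h
    have hu : u = [] := List.eq_nil_of_length_eq_zero (by omega)
    have hv : v = [] := List.eq_nil_of_length_eq_zero (by omega)
    subst hu; subst hv
    simp only [List.nil_append, shuffleWord_nil_left, shuffleWord_nil_right,
      Finsupp.mapDomain_single]
    rw [shuffleWord_cons_cons]
    simp only [shuffleWord_nil_left, shuffleWord_nil_right, Finsupp.mapDomain_single]
    exact add_comm _ _
  | succ N ih =>
    rintro u v h
    match u, v with
    | [], [] =>
      simp only [List.nil_append, shuffleWord_nil_left, shuffleWord_nil_right,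
        Finsupp.mapDomain_single]
      rw [shuffleWord_cons_cons]
      simp only [shuffleWord_nil_left, shuffleWord_nil_right, Finsupp.mapDomain_single]
      exact add_comm _ _
    | c :: u', [] =>
      have h1 : u'.length + ([] : Word d).length ≤ N := by simp at h ⊢; omega
      have e1 := ih u' [] h1
      simp only [List.nil_append] at e1
      rw [List.nil_append, List.cons_append, shuffleWord_cons_cons,
        shuffleWord_nil_right, e1]
      rw [shuffleWord_cons_cons, shuffleWord_nil_right, shuffleWord_nil_right]
      simp only [Finsupp.mapDomain_add, Finsupp.mapDomain_single, mapDomain_comm,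
        List.cons_append, List.append_assoc, List.nil_append, List.singleton_append]
      abel
    | [], e :: v' =>
      have h1 : ([] : Word d).length + v'.length ≤ N := by simp at h ⊢; omega
      have e1 := ih [] v' h1
      simp only [List.nil_append] at e1
      rw [List.nil_append, List.cons_append, shuffleWord_cons_cons,
        shuffleWord_nil_left, e1]
      rw [shuffleWord_cons_cons, shuffleWord_nil_left, shuffleWord_nil_left]
      simp only [Finsupp.mapDomain_add, Finsupp.mapDomain_single, mapDomain_comm,
        List.cons_append, List.append_assoc, List.nil_append, List.singleton_append]
      abel
    | c :: u', e :: v' =>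
      have h1 : u'.length + (e :: v').length ≤ N := by simp at h ⊢; omega
      have h2 : (c :: u').length + v'.length ≤ N := by simp at h ⊢; omega
      rw [List.cons_append, List.cons_append, shuffleWord_cons_cons,
        show e :: (v' ++ [b]) = (e :: v') ++ [b] from rfl,
        show c :: (u' ++ [a]) = (c :: u') ++ [a] from rfl,
        ih u' (e :: v') h1, ih (c :: u') v' h2]
      simp only [List.cons_append]
      rw [shuffleWord_cons_cons c e u' (v' ++ [b]),
        shuffleWord_cons_cons c e (u' ++ [a]) v']
      simp only [Finsupp.mapDomain_add, mapDomain_comm, List.cons_append]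
      abel
lemma shuffle_reverse {d : ℕ} (u v : Word d) :
    Finsupp.mapDomain List.reverse (shuffleWord d u v) =
      shuffleWord d u.reverse v.reverse := by
  suffices h : ∀ N (u v : Word d), u.length + v.length ≤ N →
      Finsupp.mapDomain List.reverse (shuffleWord d u v) =
      shuffleWord d u.reverse v.reverse from h _ u v le_rfl
  intro N
  induction N with
  | zero =>
    rintro u v h
    have hu : u = [] := List.eq_nil_of_length_eq_zero (by omega)
    have hv : v = [] := List.eq_nil_of_length_eq_zero (by omega)
    subst hu; subst hv
    simp [shuffleWord_nil_left]
  | succ N ih =>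
    rintro u v h
    match u, v with
    | [], v =>
      simp [shuffleWord_nil_left, Finsupp.mapDomain_single]
    | c :: u', [] =>
      simp [shuffleWord_nil_right, Finsupp.mapDomain_single]
    | c :: u', e :: v' =>
      have h1 : u'.length + (e :: v').length ≤ N := by simp at h ⊢; omega
      have h2 : (c :: u').length + v'.length ≤ N := by simp at h ⊢; omega
      rw [shuffleWord_cons_cons, Finsupp.mapDomain_add,
        ← Finsupp.mapDomain_comp, ← Finsupp.mapDomain_comp]
      have fc : ∀ x : Fin (d+1), (List.reverse ∘ List.cons x : Word d → Word d)
          = (· ++ [x]) ∘ List.reverse := by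
        intro x; funext w; simp
      rw [fc c, fc e, Finsupp.mapDomain_comp, Finsupp.mapDomain_comp,
        ih u' (e :: v') h1, ih (c :: u') v' h2,
        List.reverse_cons, List.reverse_cons]
      exact (shuffle_append c e u'.reverse v'.reverse).symm
lemma Admissible.append {d : ℕ} {w w' : Word d} (h : Admissible d w)
    (h' : Admissible d w') : Admissible d (w ++ w') := by
  induction h with
  | nil => simpa
  | zero _ ih => exact Admissible.zero ih
  | pair a ha _ ih => exact Admissible.pair a ha ih

lemma Admissible.reverse {d : ℕ} {w : Word d} (h : Admissible d w) :
    Admissible d w.reverse := by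
  induction h with
  | nil => exact Admissible.nil
  | zero _ ih =>
    rw [List.reverse_cons]
    exact ih.append (Admissible.zero Admissible.nil)
  | pair a ha _ ih =>
    rw [List.reverse_cons, List.reverse_cons, List.append_assoc]
    exact ih.append (Admissible.pair a ha Admissible.nil)

lemma admissible_reverse_iff {d : ℕ} (w : Word d) :
    Admissible d w.reverse ↔ Admissible d w :=
  ⟨fun h => by simpa using h.reverse, Admissible.reverse⟩

lemma Ebar_reverse {d : ℕ} (t : ℝ) (w : Word d) :
    Ebar d t w.reverse = Ebar d t w := by
  unfold Ebar
  rw [admissible_reverse_iff]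
  congr 1 <;> simp [nc, zc, dc, List.count_reverse]

lemma EbarL_mapDomain_reverse {d : ℕ} (t : ℝ) (x : KA d) :
    EbarL d t (Finsupp.mapDomain List.reverse x) = EbarL d t x := by
  unfold EbarL
  rw [Finsupp.sum_mapDomain_index (by simp) (by intros; ring)]
  exact Finsupp.sum_congr fun w _ => by rw [Ebar_reverse]
lemma wordLift_single {d : ℕ} (f : Word d → KA d) (w : Word d) (c : ℝ) :
    wordLift d f (Finsupp.single w c) = c • f w := by
  simp [wordLift]

noncomputable def shL (d : ℕ) : KA d →ₗ[ℝ] KA d →ₗ[ℝ] KA d :=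
  Finsupp.lsum ℝ fun u => LinearMap.toSpanSingleton ℝ (KA d →ₗ[ℝ] KA d)
    (wordLift d fun v => shuffleWord d u v)

lemma sh_eq_shL {d : ℕ} (x y : KA d) : sh d x y = shL d x y := by
  unfold sh shL
  rw [Finsupp.lsum_apply, LinearMap.finsupp_sum_apply]
  refine Finsupp.sum_congr fun u _ => ?_
  rw [LinearMap.toSpanSingleton_apply, LinearMap.smul_apply]
  unfold wordLift
  rw [Finsupp.lsum_apply, Finsupp.smul_sum]
  refine Finsupp.sum_congr fun v _ => ?_
  rw [LinearMap.toSpanSingleton_apply, smul_smul]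

lemma shL_single_single {d : ℕ} (u v : Word d) (c c' : ℝ) :
    shL d (Finsupp.single u c) (Finsupp.single v c') =
      (c * c') • shuffleWord d u v := by
  unfold shL
  rw [Finsupp.lsum_single, LinearMap.toSpanSingleton_apply, LinearMap.smul_apply,
    wordLift_single, smul_smul]

lemma sh_reverse {d : ℕ} (x y : KA d) :
    sh d (Finsupp.mapDomain List.reverse x) (Finsupp.mapDomain List.reverse y) =
      Finsupp.mapDomain List.reverse (sh d x y) := by
  simp only [sh_eq_shL]
  induction x using Finsupp.induction_linear with
  | zero => simp
  | add a b ha hb => simp [Finsupp.mapDomain_add, ha, hb]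
  | single u c =>
    induction y using Finsupp.induction_linear with
    | zero => simp
    | add a b ha hb =>
      simp only [Finsupp.mapDomain_add, Finsupp.mapDomain_single, map_add] at ha hb ⊢
      rw [ha, hb]
    | single v c' =>
      rw [Finsupp.mapDomain_single, Finsupp.mapDomain_single,
        shL_single_single, shL_single_single, Finsupp.mapDomain_smul,
        shuffle_reverse]
lemma key_rev {d : ℕ} (t : ℝ) (w : Word d) :
    ((idE d - EE d t) ∘ₗ revE d) (Finsupp.single w 1) =
      Finsupp.mapDomain List.reverse
        (((idE d - EE d t) ∘ₗ idE d) (Finsupp.single w 1)) := by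
  simp only [LinearMap.comp_apply, idE, LinearMap.id_apply, LinearMap.sub_apply,
    revE, EE, wordLift_single, one_smul]
  rw [← Finsupp.lmapDomain_apply ℝ ℝ, map_sub, Finsupp.lmapDomain_apply,
    Finsupp.lmapDomain_apply, Finsupp.mapDomain_single, Finsupp.mapDomain_single,
    List.reverse_nil, Ebar_reverse]

theorem stmt_3 (d n : ℕ) (hd : 1 ≤ d) (hn : 1 ≤ n) (t : ℝ) (ht : 0 < t)
    {H : Type*} [NormedAddCommGroup H] [InnerProductSpace ℝ H]
    (Vf : Word d → H) :
    ip d t Vf n ((idE d - EE d t) ∘ₗ revE d) ((idE d - EE d t) ∘ₗ revE d)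
      = ip d t Vf n ((idE d - EE d t) ∘ₗ idE d) ((idE d - EE d t) ∘ₗ idE d) := by
  unfold ip
  refine Finset.sum_congr rfl fun u _ => Finset.sum_congr rfl fun v _ => ?_
  congr 1
  rw [key_rev, key_rev, sh_reverse, EbarL_mapDomain_reverse]
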